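/- Let K be a field of characteristic zero equipped with a derivation δ : K → K, and fix natural numbers n ≥ 1 and h. Let ∇_h : K^n → K^{n(h+1)} be the map a ↦ (a, δa, …, δ^h a) (δ applied coordinatewise). Then for every Zariski closed subset V ⊆ K^{n(h+1)}, the collection of maximal elements (under inclusion) of the family 𝒫(V) = { W ⊆ V : W is an irreducible Zariski closed set and W ∩ ∇_h(K^n) is dense in W } is finite, and every member of 𝒫(V) is contained in a maximal member of 𝒫(V). (This is Lemma 2.12 of the paper: a variety has only finitely many maximal irreducible prolongation admissible subvarieties.) -/

import Mathlib

/-- The Zariski topology on affine space `σ → K`: the closed sets are the common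
zero loci of sets of polynomials over `K`. -/
def zariskiTopology (K : Type*) [CommRing K] (σ : Type*) :
    TopologicalSpace (σ → K) :=
  TopologicalSpace.generateFrom
    {U | ∃ f : MvPolynomial σ K, U = {x | MvPolynomial.eval x f ≠ 0}}

/-- The prolongation map `∇_h : K^n → K^{n(h+1)}`, `a ↦ (a, δa, …, δ^h a)`,
with `K^{n(h+1)}` indexed by pairs `(i, j) : Fin n × Fin (h+1)`. -/
def nablaMap {K : Type*} (δ : K → K) (n h : ℕ) (a : Fin n → K) :
    Fin n × Fin (h + 1) → K :=
  fun p => δ^[(p.2 : ℕ)] (a p.1)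

/-- The family `𝒫(V)` of irreducible Zariski closed subsets `W ⊆ V` whose
differential points `W ∩ ∇_h(K^n)` are dense in `W`. -/
def proAdmissibleIn {K : Type*} [Field K] (δ : K → K) (n h : ℕ)
    (V : Set (Fin n × Fin (h + 1) → K)) : Set (Set (Fin n × Fin (h + 1) → K)) :=
  {W | W ⊆ V ∧ @IsClosed _ (zariskiTopology K (Fin n × Fin (h + 1))) W ∧
    @IsIrreducible _ (zariskiTopology K (Fin n × Fin (h + 1))) W ∧
    W ⊆ @closure _ (zariskiTopology K (Fin n × Fin (h + 1)))
      (W ∩ Set.range (nablaMap δ n h))}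

section Aux

open TopologicalSpace

variable {K : Type*} [Field K] {σ : Type*}

/-- zero locus -/
def zRZl (S : Set (MvPolynomial σ K)) : Set (σ → K) :=
  {x | ∀ f ∈ S, MvPolynomial.eval x f = 0}

lemma zRopen_aux :
    ∀ U : Set (σ → K), TopologicalSpace.GenerateOpen
      {U | ∃ f : MvPolynomial σ K, U = {x | MvPolynomial.eval x f ≠ 0}} U →
      ∃ S : Set (MvPolynomial σ K), U = ⋃ f ∈ S, {x | MvPolynomial.eval x f ≠ 0} := by
  intro U hU
  induction hU with
  | basic u hu =>
      obtain ⟨f, rfl⟩ := hu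
      exact ⟨{f}, by simp⟩
  | univ => exact ⟨{1}, by simp⟩
  | inter u v _ _ ihu ihv =>
      obtain ⟨S₁, rfl⟩ := ihu
      obtain ⟨S₂, rfl⟩ := ihv
      refine ⟨Set.image2 (· * ·) S₁ S₂, ?_⟩
      ext x
      simp only [Set.mem_inter_iff, Set.mem_iUnion, Set.mem_setOf_eq, Set.mem_image2,
        exists_prop]
      constructor
      · rintro ⟨⟨f, hf, hf0⟩, ⟨g, hg, hg0⟩⟩
        refine ⟨f * g, ⟨f, hf, g, hg, rfl⟩, ?_⟩
        rw [map_mul]; exact mul_ne_zero hf0 hg0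
      · rintro ⟨p, ⟨f, hf, g, hg, rfl⟩, hp⟩
        rw [map_mul] at hp
        exact ⟨⟨f, hf, left_ne_zero_of_mul hp⟩, ⟨g, hg, right_ne_zero_of_mul hp⟩⟩
  | sUnion 𝒮 _ ih =>
      choose Sf hSf using ih
      refine ⟨⋃ u : 𝒮, Sf u u.2, ?_⟩
      ext x
      simp only [Set.mem_sUnion, Set.mem_iUnion, Set.mem_setOf_eq, exists_prop]
      constructor
      · rintro ⟨u, hu, hx⟩
        rw [hSf u hu] at hx
        simp only [Set.mem_iUnion, Set.mem_setOf_eq, exists_prop] at hx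
        obtain ⟨f, hf, hf0⟩ := hx
        exact ⟨f, ⟨⟨u, hu⟩, hf⟩, hf0⟩
      · rintro ⟨f, ⟨⟨u, hu⟩, hf⟩, hf0⟩
        refine ⟨u, hu, ?_⟩
        rw [hSf u hu]
        simp only [Set.mem_iUnion, Set.mem_setOf_eq, exists_prop]
        exact ⟨f, hf, hf0⟩

lemma zRIsClosed_iff (C : Set (σ → K)) :
    @IsClosed _ (zariskiTopology K σ) C ↔ ∃ S : Set (MvPolynomial σ K), C = zRZl S := by
  letI := zariskiTopology K σ
  constructor
  · intro hC
    obtain ⟨S, hS⟩ := zRopen_aux Cᶜ hC.isOpen_compl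
    refine ⟨S, ?_⟩
    ext x
    have hx : x ∈ C ↔ x ∉ Cᶜ := by simp
    rw [hx, hS]
    simp [zRZl]
  · rintro ⟨S, rfl⟩
    have hzl : zRZl S = ⋂ f ∈ S, {x : σ → K | MvPolynomial.eval x f = 0} := by
      ext x; simp [zRZl]
    rw [hzl]
    refine isClosed_biInter fun f _ => ?_
    have hop : IsOpen {x : σ → K | MvPolynomial.eval x f ≠ 0} :=
      TopologicalSpace.GenerateOpen.basic _ ⟨f, rfl⟩
    have : {x : σ → K | MvPolynomial.eval x f = 0} =
        {x : σ → K | MvPolynomial.eval x f ≠ 0}ᶜ := by ext y; simp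
    rw [this]
    exact hop.isClosed_compl

/-- vanishing ideal -/
def zRVI (C : Set (σ → K)) : Ideal (MvPolynomial σ K) where
  carrier := {f | ∀ x ∈ C, MvPolynomial.eval x f = 0}
  add_mem' := by intro a b ha hb x hx; rw [map_add, ha x hx, hb x hx, add_zero]
  zero_mem' := by intro x hx; simp
  smul_mem' := by intro c f hf x hx; rw [smul_eq_mul, map_mul, hf x hx, mul_zero]

lemma zRZl_zRVI (C : Set (σ → K)) (hC : @IsClosed _ (zariskiTopology K σ) C) :
    zRZl (zRVI C : Set (MvPolynomial σ K)) = C := by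
  obtain ⟨S, rfl⟩ := (zRIsClosed_iff C).mp hC
  apply subset_antisymm
  · intro x hx f hf
    exact hx f (fun y hy => hy f hf)
  · intro x hx f hf
    exact hf x hx

lemma zariski_noetherian [Finite σ] :
    @NoetherianSpace (σ → K) (zariskiTopology K σ) := by
  letI := zariskiTopology K σ
  refine ((noetherianSpace_TFAE (σ → K)).out 0 1).mpr ?_
  have hsm : StrictMono (fun C : Closeds (σ → K) =>
      OrderDual.toDual (zRVI (C : Set (σ → K)))) := by
    intro C C' hlt
    simp only [OrderDual.toDual_lt_toDual]
    have hle : zRVI (C' : Set (σ → K)) ≤ zRVI (C : Set (σ → K)) := by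
      intro f hf x hx
      exact hf x (le_of_lt hlt hx)
    refine lt_of_le_of_ne hle (fun heq => hlt.ne ?_)
    apply SetLike.coe_injective
    rw [← zRZl_zRVI (C : Set (σ → K)) C.2, ← zRZl_zRVI (C' : Set (σ → K)) C'.2, heq]
  exact hsm.wellFoundedLT

/-- the admissible family, abstractly -/
def zRPP {X : Type*} [TopologicalSpace X] (V S : Set X) : Set (Set X) :=
  {W | W ⊆ V ∧ IsClosed W ∧ IsIrreducible W ∧ W ⊆ closure (W ∩ S)}

theorem zRgen {X : Type*} [TopologicalSpace X] [NoetherianSpace X]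
    (V S : Set X) (hV : IsClosed V) :
    {W | Maximal (· ∈ zRPP V S) W}.Finite ∧
      ∀ W ∈ zRPP V S, ∃ W', Maximal (· ∈ zRPP V S) W' ∧ W ⊆ W' := by
  classical
  set D := closure (V ∩ S) with hD
  have hDc : IsClosed D := isClosed_closure
  have hDV : D ⊆ V := closure_minimal Set.inter_subset_left hV
  have hDzS : D ⊆ closure (D ∩ S) := by
    refine closure_minimal (fun x hx => subset_closure ?_) isClosed_closure
    exact ⟨subset_closure hx, hx.2⟩
  obtain ⟨S₀, hS₀fin, hS₀cl, hS₀irr, hS₀U⟩ :=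
    NoetherianSpace.exists_finite_set_isClosed_irreducible hDc
  set Q : ℕ → Prop := fun m => ∃ T : Finset (Set X), T.card = m ∧
    (∀ Z ∈ T, IsClosed Z) ∧ (∀ Z ∈ T, IsIrreducible Z) ∧ D = ⋃₀ ↑T with hQdef
  have hQex : ∃ m, Q m := by
    refine ⟨hS₀fin.toFinset.card, hS₀fin.toFinset, rfl, ?_, ?_, ?_⟩
    · intro Z hZ; exact hS₀cl Z (hS₀fin.mem_toFinset.mp hZ)
    · intro Z hZ; exact hS₀irr Z (hS₀fin.mem_toFinset.mp hZ)
    · rw [hS₀fin.coe_toFinset]; exact hS₀U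
  obtain ⟨T, hTcard, hTcl, hTirr, hTU⟩ := Nat.find_spec hQex
  have hTP : ∀ Z ∈ T, Z ∈ zRPP V S := by
    intro Z₀ hZ₀
    have hsub : Z₀ ⊆ D := by
      rw [hTU]; exact Set.subset_sUnion_of_mem hZ₀
    refine ⟨hsub.trans hDV, hTcl _ hZ₀, hTirr _ hZ₀, ?_⟩
    have hcover : D ⊆ ⋃₀ ((T.image (fun Z => closure (Z ∩ S)) : Finset (Set X)) : Set (Set X)) := by
      have h1 : D ∩ S ⊆ ⋃₀ ((T.image (fun Z => closure (Z ∩ S)) : Finset (Set X)) : Set (Set X)) := by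
        rintro y ⟨hyD, hyS⟩
        rw [hTU] at hyD
        obtain ⟨Z, hZ, hyZ⟩ := hyD
        exact ⟨closure (Z ∩ S), Finset.mem_coe.mpr (Finset.mem_image_of_mem _ hZ),
          subset_closure ⟨hyZ, hyS⟩⟩
      have h2 : IsClosed (⋃₀ ((T.image (fun Z => closure (Z ∩ S)) : Finset (Set X)) : Set (Set X))) := by
        rw [Set.sUnion_eq_biUnion]
        refine Set.Finite.isClosed_biUnion (Finset.finite_toSet _) ?_
        rintro t ht
        obtain ⟨Z, _, rfl⟩ := Finset.mem_image.mp (Finset.mem_coe.mp ht)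
        exact isClosed_closure
      exact fun x hx => closure_minimal h1 h2 (hDzS hx)
    obtain ⟨W', hW'mem, hZW'⟩ :=
      (isIrreducible_iff_sUnion_isClosed.mp (hTirr _ hZ₀))
        (T.image fun Z => closure (Z ∩ S))
        (by rintro t ht; obtain ⟨Z, _, rfl⟩ := Finset.mem_image.mp ht; exact isClosed_closure)
        (hsub.trans hcover)
    obtain ⟨Z, hZT, rfl⟩ := Finset.mem_image.mp hW'mem
    have hZZ : Z₀ ⊆ Z := hZW'.trans (closure_minimal Set.inter_subset_left (hTcl _ hZT))
    rcases eq_or_ne Z Z₀ with heq | hne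
    · rw [heq] at hZW'; exact hZW'
    · exfalso
      have hcov' : D = ⋃₀ ↑(T.erase Z₀) := by
        apply subset_antisymm
        · intro x hx
          rw [hTU] at hx
          obtain ⟨Z', hZ'T, hxZ'⟩ := hx
          rcases eq_or_ne Z' Z₀ with rfl | hne'
          · exact ⟨Z, Finset.mem_coe.mpr (Finset.mem_erase.mpr ⟨hne, hZT⟩), hZZ hxZ'⟩
          · exact ⟨Z', Finset.mem_coe.mpr (Finset.mem_erase.mpr ⟨hne', hZ'T⟩), hxZ'⟩
        · rw [hTU]
          exact Set.sUnion_subset_sUnion (by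
            intro t ht
            exact Finset.mem_coe.mpr (Finset.mem_of_mem_erase (Finset.mem_coe.mp ht)))
      have hQ' : Q (T.erase Z₀).card :=
        ⟨T.erase Z₀, rfl, fun Z' hZ' => hTcl _ (Finset.mem_of_mem_erase hZ'),
          fun Z' hZ' => hTirr _ (Finset.mem_of_mem_erase hZ'), hcov'⟩
      have hle := Nat.find_min' hQex hQ'
      have hcard : (T.erase Z₀).card = T.card - 1 := Finset.card_erase_of_mem hZ₀
      have hpos : 0 < T.card := Finset.card_pos.mpr ⟨Z₀, hZ₀⟩
      omega
  have hcov : ∀ W ∈ zRPP V S, ∃ Z ∈ T, W ⊆ Z := by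
    rintro W ⟨hWV, _, hWirr, hWd⟩
    have hWD : W ⊆ D := by
      refine hWd.trans (closure_mono ?_)
      exact Set.inter_subset_inter_left _ hWV
    rw [hTU] at hWD
    exact isIrreducible_iff_sUnion_isClosed.mp hWirr T hTcl hWD
  constructor
  · apply T.finite_toSet.subset
    rintro W hW
    obtain ⟨Z, hZT, hWZ⟩ := hcov W hW.1
    have hZW : Z ⊆ W := hW.2 (hTP Z hZT) hWZ
    have : W = Z := subset_antisymm hWZ hZW
    rw [this]; exact hZT
  · intro W hW
    obtain ⟨Z, hZT, hWZ⟩ := hcov W hW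
    set A : Set (Set X) := {Z' | Z' ∈ T ∧ Z ⊆ Z'} with hA
    have hAfin : A.Finite := T.finite_toSet.subset fun _ h => h.1
    obtain ⟨Z', ⟨hZ'T, hZZ'⟩, hmax⟩ :=
      ((hAfin.exists_maximal ⟨Z, hZT, subset_rfl⟩).imp fun Z' hm =>
        ⟨hm.1, fun b hb hle => subset_antisymm hle (hm.2 hb hle)⟩ :
        ∃ Z' ∈ A, ∀ Z'' ∈ A, Z' ⊆ Z'' → Z' = Z'')
    refine ⟨Z', ⟨hTP _ hZ'T, ?_⟩, hWZ.trans hZZ'⟩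
    intro W'' hW'' hle
    obtain ⟨Z'', hZ''T, hW''Z''⟩ := hcov W'' hW''
    have hAZ'' : Z'' ∈ A := ⟨hZ''T, hZZ'.trans (hle.trans hW''Z'')⟩
    have heq : Z' = Z'' := hmax Z'' hAZ'' (hle.trans hW''Z'')
    rw [heq]; exact hW''Z''

end Aux

/-- A Zariski closed set `V ⊆ K^{n(h+1)}` has only finitely many maximal
irreducible prolongation admissible subvarieties, and every irreducible
prolongation admissible subvariety of `V` is contained in a maximal one. -/
theorem finitely_many_maximal_prolongation_admissible
    {K : Type*} [Field K] [CharZero K] (δ : K → K)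
    (hδadd : ∀ a b, δ (a + b) = δ a + δ b)
    (hδmul : ∀ a b, δ (a * b) = a * δ b + b * δ a)
    (n h : ℕ) (hn : 1 ≤ n)
    (V : Set (Fin n × Fin (h + 1) → K))
    (hV : @IsClosed _ (zariskiTopology K (Fin n × Fin (h + 1))) V) :
    {W | Maximal (· ∈ proAdmissibleIn δ n h V) W}.Finite ∧
      ∀ W ∈ proAdmissibleIn δ n h V,
        ∃ W', Maximal (· ∈ proAdmissibleIn δ n h V) W' ∧ W ⊆ W' := by
  letI := zariskiTopology K (Fin n × Fin (h + 1))
  haveI : TopologicalSpace.NoetherianSpace (Fin n × Fin (h + 1) → K) := zariski_noetherian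
  have hPeq : proAdmissibleIn δ n h V = zRPP V (Set.range (nablaMap δ n h)) := rfl
  rw [hPeq]
  exact zRgen V (Set.range (nablaMap δ n h)) hV
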